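/- Let M > 0, Q ≠ 0, Λ > 0 and s ∈ (0,1] satisfy 8Q² < 9sM², Λ₋ < Λ < Λ₊ and 0 < Λ < Λ₊. Then the polynomial P(·,s) has exactly three positive roots R < r₀ < r∞; they satisfy P'(R,s) > 0, P'(r₀,s) < 0 and P'(r∞,s) > 0; moreover P(r,s) < 0 for all r ∈ [0,R) ∪ (r₀,r∞) and P(r,s) > 0 for all r ∈ (R,r₀) ∪ (r∞,∞). -/

import Mathlib

noncomputable section

/-- The quartic polynomial `P(r,s) = sL/3*r^4 - r^2 + 2sM*r - sQ^2` (case `Q != 0`). -/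
def P (M Q Λ s r : ℝ) : ℝ := s * Λ / 3 * r ^ 4 - r ^ 2 + 2 * s * M * r - s * Q ^ 2

/-- First derivative of `P` with respect to `r`. -/
def P' (M Q Λ s r : ℝ) : ℝ := 4 * s * Λ / 3 * r ^ 3 - 2 * r + 2 * s * M

/-- Second derivative of `P` with respect to `r`. -/
def P'' (M Q Λ s r : ℝ) : ℝ := 4 * s * Λ * r ^ 2 - 2

/-- `Λ₋`, defined for `β := 9sM² − 8Q² ≥ 0`. -/
def Λminus (M Q s : ℝ) : ℝ :=
  1 / (32 * s ^ 2 * Q ^ 6) *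
    (8 * Q ^ 4 - (9 * s * M ^ 2 - 8 * Q ^ 2) * (9 * s * M ^ 2 - 8 * Q ^ 2 + 4 * Q ^ 2)
      - 3 * Real.sqrt (s * M ^ 2 * (9 * s * M ^ 2 - 8 * Q ^ 2) ^ 3))

/-- `Λ₊`, defined for `β := 9sM² − 8Q² ≥ 0`. -/
def Λplus (M Q s : ℝ) : ℝ :=
  1 / (32 * s ^ 2 * Q ^ 6) *
    (8 * Q ^ 4 - (9 * s * M ^ 2 - 8 * Q ^ 2) * (9 * s * M ^ 2 - 8 * Q ^ 2 + 4 * Q ^ 2)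
      + 3 * Real.sqrt (s * M ^ 2 * (9 * s * M ^ 2 - 8 * Q ^ 2) ^ 3))


private lemma aux_P'_far (s Λ M T : ℝ) (hs0 : 0 < s) (hM : 0 < M)
    (hT1 : 1 ≤ T) (haT : 3 ≤ s * Λ * T) :
    0 < 4 * s * Λ / 3 * T ^ 3 - 2 * T + 2 * s * M := by
  have h1 : 3 * T ^ 2 ≤ s * Λ * T * T ^ 2 :=
    mul_le_mul_of_nonneg_right haT (sq_nonneg T)
  have h2 : 0 ≤ T * (T - 1) := mul_nonneg (by linarith) (by linarith)
  nlinarith [mul_pos hs0 hM]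

private lemma aux_P_far (s Λ M Q T : ℝ) (hs0 : 0 < s) (hM : 0 < M) (hQ2 : 0 < Q ^ 2)
    (hT1 : 1 + s * Q ^ 2 ≤ T) (haT : 3 ≤ s * Λ * T) :
    0 < s * Λ / 3 * T ^ 4 - T ^ 2 + 2 * s * M * T - s * Q ^ 2 := by
  have hsQ : 0 < s * Q ^ 2 := by positivity
  have hT1' : 1 ≤ T := by linarith
  have hT0 : 0 < T := by linarith
  have h1 : 3 * T ^ 3 ≤ s * Λ * T * T ^ 3 :=
    mul_le_mul_of_nonneg_right haT (by positivity)
  have hsq : 1 ≤ T ^ 2 := by nlinarith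
  have hB : 1 * (s * Q ^ 2) ≤ T ^ 2 * (T - 1) :=
    mul_le_mul hsq (by linarith) hsQ.le (by positivity)
  nlinarith [mul_pos (mul_pos hs0 hM) hT0]

set_option maxHeartbeats 1000000 in
/-- Case C₁: full root and sign structure of the quartic. -/
theorem root_structure_case_C1 (M Q Λ s : ℝ)
    (hM : 0 < M) (hQ : Q ≠ 0) (hΛ : 0 < Λ) (hs0 : 0 < s) (hs1 : s ≤ 1)
    (hβ : 8 * Q ^ 2 < 9 * s * M ^ 2)
    (hlo : Λminus M Q s < Λ) (hhi : Λ < Λplus M Q s) :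
    ∃ R r₀ rinf : ℝ, 0 < R ∧ R < r₀ ∧ r₀ < rinf ∧
      P M Q Λ s R = 0 ∧ P M Q Λ s r₀ = 0 ∧ P M Q Λ s rinf = 0 ∧
      (∀ r : ℝ, 0 < r → P M Q Λ s r = 0 → r = R ∨ r = r₀ ∨ r = rinf) ∧
      0 < P' M Q Λ s R ∧ P' M Q Λ s r₀ < 0 ∧ 0 < P' M Q Λ s rinf ∧
      (∀ r : ℝ, 0 ≤ r → r < R → P M Q Λ s r < 0) ∧
      (∀ r : ℝ, r₀ < r → r < rinf → P M Q Λ s r < 0) ∧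
      (∀ r : ℝ, R < r → r < r₀ → 0 < P M Q Λ s r) ∧
      (∀ r : ℝ, rinf < r → 0 < P M Q Λ s r) := by
  -- basic positivity facts
  have hQ2 : (0:ℝ) < Q ^ 2 := by positivity
  have hβ0 : (0:ℝ) < 9 * s * M ^ 2 - 8 * Q ^ 2 := by linarith
  have hw : (0:ℝ) < 9 * s ^ 2 * M ^ 2 - 8 * s * Q ^ 2 := by nlinarith [mul_pos hs0 hβ0]
  obtain ⟨v, hvdef⟩ : ∃ v : ℝ, v = Real.sqrt (9 * s ^ 2 * M ^ 2 - 8 * s * Q ^ 2) :=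
    ⟨_, rfl⟩
  have hv2 : v ^ 2 = 9 * s ^ 2 * M ^ 2 - 8 * s * Q ^ 2 := by
    rw [hvdef]; exact Real.sq_sqrt hw.le
  have hv0 : 0 < v := by rw [hvdef]; exact Real.sqrt_pos.mpr hw
  have hsqrt : Real.sqrt (s * M ^ 2 * (9 * s * M ^ 2 - 8 * Q ^ 2) ^ 3)
      = M * (9 * s * M ^ 2 - 8 * Q ^ 2) * v := by
    rw [show s * M ^ 2 * (9 * s * M ^ 2 - 8 * Q ^ 2) ^ 3
        = (M * (9 * s * M ^ 2 - 8 * Q ^ 2)) ^ 2 * (9 * s ^ 2 * M ^ 2 - 8 * s * Q ^ 2) from by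
      ring]
    rw [Real.sqrt_mul (sq_nonneg _), Real.sqrt_sq (by positivity), hvdef]
  have h32 : (0:ℝ) < 32 * s ^ 2 * Q ^ 6 := by positivity
  -- rewrite the Λ bounds as polynomial inequalities
  have hhi' : Λ * (32 * s ^ 2 * Q ^ 6)
      < 8 * Q ^ 4 - (9 * s * M ^ 2 - 8 * Q ^ 2) * (9 * s * M ^ 2 - 8 * Q ^ 2 + 4 * Q ^ 2)
        + 3 * (M * (9 * s * M ^ 2 - 8 * Q ^ 2) * v) := by
    have h := mul_lt_mul_of_pos_right hhi h32
    calc Λ * (32 * s ^ 2 * Q ^ 6) < Λplus M Q s * (32 * s ^ 2 * Q ^ 6) := h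
      _ = _ := by rw [Λplus, hsqrt]; field_simp
  have hlo' : 8 * Q ^ 4 - (9 * s * M ^ 2 - 8 * Q ^ 2) * (9 * s * M ^ 2 - 8 * Q ^ 2 + 4 * Q ^ 2)
        - 3 * (M * (9 * s * M ^ 2 - 8 * Q ^ 2) * v) < Λ * (32 * s ^ 2 * Q ^ 6) := by
    have h := mul_lt_mul_of_pos_right hlo h32
    calc 8 * Q ^ 4 - (9 * s * M ^ 2 - 8 * Q ^ 2) * (9 * s * M ^ 2 - 8 * Q ^ 2 + 4 * Q ^ 2)
          - 3 * (M * (9 * s * M ^ 2 - 8 * Q ^ 2) * v)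
        = Λminus M Q s * (32 * s ^ 2 * Q ^ 6) := by rw [Λminus, hsqrt]; field_simp
      _ < _ := h
  -- the auxiliary quantities F, Fm
  have h9 : (0:ℝ) < 9 * M ^ 2 * s - 2 * Q ^ 2 := by linarith
  have h3 : (0:ℝ) < 3 * M ^ 2 * s - 2 * Q ^ 2 := by linarith
  obtain ⟨F, hFdef⟩ : ∃ F : ℝ,
      F = v * (9 * M ^ 2 * s - 2 * Q ^ 2) + 9 * M * s * (3 * M ^ 2 * s - 2 * Q ^ 2) := ⟨_, rfl⟩
  obtain ⟨Fm, hFmdef⟩ : ∃ Fm : ℝ,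
      Fm = -(v * (9 * M ^ 2 * s - 2 * Q ^ 2)) + 9 * M * s * (3 * M ^ 2 * s - 2 * Q ^ 2) :=
    ⟨_, rfl⟩
  have hF : 0 < F := by
    have := mul_pos hv0 h9
    have := mul_pos (by positivity : (0:ℝ) < 9 * M * s) h3
    rw [hFdef]; linarith
  have hFFm : F * Fm = 32 * s * Q ^ 6 := by
    rw [hFdef, hFmdef]
    linear_combination (-4 * Q ^ 4 + 36 * M ^ 2 * Q ^ 2 * s - 81 * M ^ 4 * s ^ 2) * hv2
  have hFm : 0 < Fm := by
    rcases lt_or_ge 0 Fm with h | h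
    · exact h
    · exfalso
      have h1 : F * Fm ≤ 0 := mul_nonpos_iff.mpr (Or.inl ⟨hF.le, h⟩)
      have h2 : (0:ℝ) < 32 * s * Q ^ 6 := by positivity
      linarith
  -- the points x₋ < x₊ where P at a critical point changes sign
  have hv3 : v < 3 * s * M := by
    have hsq : v ^ 2 < (3 * s * M) ^ 2 := by
      rw [hv2]; nlinarith [mul_pos hs0 hQ2]
    exact lt_of_pow_lt_pow_left₀ 2 (by positivity) hsq
  obtain ⟨xm, hxmdef⟩ : ∃ x : ℝ, x = (3 * s * M - v) / 2 := ⟨_, rfl⟩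
  obtain ⟨xp, hxpdef⟩ : ∃ x : ℝ, x = (3 * s * M + v) / 2 := ⟨_, rfl⟩
  have hxm0 : 0 < xm := by rw [hxmdef]; linarith
  have hxx : xm < xp := by rw [hxmdef, hxpdef]; linarith
  -- signs of P' at x₋ and x₊
  have hPxp : P' M Q Λ s xp < 0 := by
    have key : 48 * Q ^ 6 * P' M Q Λ s xp
        = F * (Λ * (32 * s ^ 2 * Q ^ 6)
            - (8 * Q ^ 4 - (9 * s * M ^ 2 - 8 * Q ^ 2) * (9 * s * M ^ 2 - 8 * Q ^ 2 + 4 * Q ^ 2)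
              + 3 * (M * (9 * s * M ^ 2 - 8 * Q ^ 2) * v))) := by
      simp only [P', hxpdef, hFdef]
      linear_combination (8 * Q ^ 6 * Λ * s * v + 48 * M * Q ^ 4 + 72 * M * Q ^ 6 * Λ * s ^ 2
        - 270 * M ^ 3 * Q ^ 2 * s + 243 * M ^ 5 * s ^ 2) * hv2
    have hneg : F * (Λ * (32 * s ^ 2 * Q ^ 6)
            - (8 * Q ^ 4 - (9 * s * M ^ 2 - 8 * Q ^ 2) * (9 * s * M ^ 2 - 8 * Q ^ 2 + 4 * Q ^ 2)
              + 3 * (M * (9 * s * M ^ 2 - 8 * Q ^ 2) * v))) < 0 :=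
      mul_neg_of_pos_of_neg hF (by linarith)
    have hQ6 : (0:ℝ) < 48 * Q ^ 6 := by positivity
    by_contra hcon
    push_neg at hcon
    have h0 : 0 ≤ 48 * Q ^ 6 * P' M Q Λ s xp := mul_nonneg hQ6.le hcon
    linarith
  have hPxm : 0 < P' M Q Λ s xm := by
    have key : 48 * Q ^ 6 * P' M Q Λ s xm
        = Fm * (Λ * (32 * s ^ 2 * Q ^ 6)
            - (8 * Q ^ 4 - (9 * s * M ^ 2 - 8 * Q ^ 2) * (9 * s * M ^ 2 - 8 * Q ^ 2 + 4 * Q ^ 2)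
              - 3 * (M * (9 * s * M ^ 2 - 8 * Q ^ 2) * v))) := by
      simp only [P', hxmdef, hFmdef]
      linear_combination (-8 * Q ^ 6 * Λ * s * v + 48 * M * Q ^ 4 + 72 * M * Q ^ 6 * Λ * s ^ 2
        - 270 * M ^ 3 * Q ^ 2 * s + 243 * M ^ 5 * s ^ 2) * hv2
    have hpos : 0 < Fm * (Λ * (32 * s ^ 2 * Q ^ 6)
            - (8 * Q ^ 4 - (9 * s * M ^ 2 - 8 * Q ^ 2) * (9 * s * M ^ 2 - 8 * Q ^ 2 + 4 * Q ^ 2)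
              - 3 * (M * (9 * s * M ^ 2 - 8 * Q ^ 2) * v))) :=
      mul_pos hFm (by linarith)
    have hQ6 : (0:ℝ) < 48 * Q ^ 6 := by positivity
    by_contra hcon
    push_neg at hcon
    have h0 := mul_le_mul_of_nonneg_left hcon hQ6.le
    rw [mul_zero] at h0
    linarith
  -- continuity of P'
  have hP'cont : Continuous (P' M Q Λ s) := by
    unfold P'; fun_prop
  -- first critical point r₁ ∈ (x₋, x₊)
  obtain ⟨r₁, hr₁mem, hr₁0⟩ :=
    intermediate_value_Ioo' hxx.le hP'cont.continuousOn ⟨hPxp, hPxm⟩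
  -- a far point T₁ where P' > 0
  have hsΛ : 0 < s * Λ := mul_pos hs0 hΛ
  have hdiv : 0 < 3 / (s * Λ) := by positivity
  obtain ⟨T₁, hT₁def⟩ : ∃ t : ℝ, t = xp + 3 / (s * Λ) + 1 := ⟨_, rfl⟩
  have hT₁x : xp < T₁ := by rw [hT₁def]; linarith
  have hxp0 : 0 < xp := lt_trans hxm0 hxx
  have hT₁1 : 1 ≤ T₁ := by rw [hT₁def]; linarith
  have haT : 3 ≤ s * Λ * T₁ := by
    have h' : 3 / (s * Λ) ≤ T₁ := by rw [hT₁def]; linarith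
    have := (div_le_iff₀ hsΛ).mp h'
    linarith
  have hT₁pos : 0 < T₁ := by linarith
  have hP'T₁ : 0 < P' M Q Λ s T₁ := by
    simp only [P']
    exact aux_P'_far s Λ M T₁ hs0 hM hT₁1 haT
  -- second critical point r₂ ∈ (x₊, T₁)
  obtain ⟨r₂, hr₂mem, hr₂0⟩ :=
    intermediate_value_Ioo hT₁x.le hP'cont.continuousOn ⟨hPxp, hP'T₁⟩
  have hr₁r₂ : r₁ < r₂ := lt_trans hr₁mem.2 hr₂mem.1
  have hr₁pos : 0 < r₁ := lt_trans hxm0 hr₁mem.1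
  have hr₂pos : 0 < r₂ := lt_trans hr₁pos hr₁r₂
  -- the factorization of P'
  have hE1 : 4 * s * Λ / 3 * r₁ ^ 3 - 2 * r₁ + 2 * s * M = 0 := hr₁0
  have hE2 : 4 * s * Λ / 3 * r₂ ^ 3 - 2 * r₂ + 2 * s * M = 0 := hr₂0
  have hsym2 : 4 * s * Λ / 3 * (r₁ ^ 2 + r₁ * r₂ + r₂ ^ 2) = 2 := by
    have hne : r₁ - r₂ ≠ 0 := sub_ne_zero.mpr (ne_of_lt hr₁r₂)
    apply mul_left_cancel₀ hne
    linear_combination hE1 - hE2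
  have hsym3 : 4 * s * Λ / 3 * (r₁ * r₂ * (r₁ + r₂)) = 2 * s * M := by
    linear_combination r₁ * hsym2 - hE1
  have hfac : ∀ r : ℝ, P' M Q Λ s r
      = 4 * s * Λ / 3 * ((r - r₁) * (r - r₂) * (r + r₁ + r₂)) := by
    intro r
    simp only [P']
    linear_combination r * hsym2 - hsym3
  have hk : (0:ℝ) < 4 * s * Λ / 3 := by positivity
  -- sign of P' on the three regions
  have P'pos1 : ∀ r : ℝ, 0 ≤ r → r < r₁ → 0 < P' M Q Λ s r := by
    intro r h0 h1
    have heq : P' M Q Λ s r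
        = 4 * s * Λ / 3 * ((r₁ - r) * (r₂ - r) * (r + r₁ + r₂)) := by rw [hfac]; ring
    rw [heq]
    exact mul_pos hk (mul_pos (mul_pos (by linarith) (by linarith)) (by linarith))
  have P'neg : ∀ r : ℝ, r₁ < r → r < r₂ → P' M Q Λ s r < 0 := by
    intro r h1 h2
    have heq : P' M Q Λ s r
        = -(4 * s * Λ / 3 * ((r - r₁) * (r₂ - r) * (r + r₁ + r₂))) := by rw [hfac]; ring
    rw [heq]
    have : 0 < 4 * s * Λ / 3 * ((r - r₁) * (r₂ - r) * (r + r₁ + r₂)) :=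
      mul_pos hk (mul_pos (mul_pos (by linarith) (by linarith)) (by linarith))
    linarith
  have P'pos2 : ∀ r : ℝ, r₂ < r → 0 < P' M Q Λ s r := by
    intro r h2
    rw [hfac]
    exact mul_pos hk (mul_pos (mul_pos (by linarith) (by linarith)) (by linarith))
  -- values of P at 0 and at the critical points
  have hP0 : P M Q Λ s 0 < 0 := by
    have hval : P M Q Λ s 0 = -(s * Q ^ 2) := by simp [P]
    rw [hval]
    have : 0 < s * Q ^ 2 := by positivity
    linarith
  have hPr₁ : 0 < P M Q Λ s r₁ := by
    have hval : P M Q Λ s r₁ = (xp - r₁) * (r₁ - xm) / 2 := by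
      simp only [P, hxpdef, hxmdef]
      linear_combination (r₁ / 4) * hE1 - (1 / 8) * hv2
    rw [hval]
    exact div_pos (mul_pos (by linarith [hr₁mem.2]) (by linarith [hr₁mem.1])) (by norm_num)
  have hPr₂ : P M Q Λ s r₂ < 0 := by
    have hval : P M Q Λ s r₂ = (xp - r₂) * (r₂ - xm) / 2 := by
      simp only [P, hxpdef, hxmdef]
      linear_combination (r₂ / 4) * hE2 - (1 / 8) * hv2
    rw [hval]
    exact div_neg_of_neg_of_pos
      (mul_neg_of_neg_of_pos (by linarith [hr₂mem.1]) (by linarith [hr₂mem.1, hxx]))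
      (by norm_num)
  -- P is differentiable with derivative P'
  have hd : ∀ r : ℝ, HasDerivAt (P M Q Λ s) (P' M Q Λ s r) r := by
    intro r
    have h := ((((hasDerivAt_pow 4 r).const_mul (s * Λ / 3)).sub (hasDerivAt_pow 2 r)).add
      ((hasDerivAt_id r).const_mul (2 * s * M))).sub_const (s * Q ^ 2)
    refine HasDerivAt.congr_deriv (f := P M Q Λ s) h ?_
    simp only [P']
    push_cast
    ring
  have hdiff : Differentiable ℝ (P M Q Λ s) := fun r => (hd r).differentiableAt
  have hPcont : Continuous (P M Q Λ s) := hdiff.continuous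
  have hderiv : deriv (P M Q Λ s) = P' M Q Λ s := funext fun r => (hd r).deriv
  -- monotonicity on the three regions
  have mono1 : StrictMonoOn (P M Q Λ s) (Set.Icc 0 r₁) := by
    apply strictMonoOn_of_deriv_pos (convex_Icc 0 r₁) hPcont.continuousOn
    intro r hr
    rw [interior_Icc] at hr
    rw [hderiv]
    exact P'pos1 r hr.1.le hr.2
  have anti : StrictAntiOn (P M Q Λ s) (Set.Icc r₁ r₂) := by
    apply strictAntiOn_of_deriv_neg (convex_Icc r₁ r₂) hPcont.continuousOn
    intro r hr
    rw [interior_Icc] at hr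
    rw [hderiv]
    exact P'neg r hr.1 hr.2
  have mono2 : StrictMonoOn (P M Q Λ s) (Set.Ici r₂) := by
    apply strictMonoOn_of_deriv_pos (convex_Ici r₂) hPcont.continuousOn
    intro r hr
    rw [interior_Ici] at hr
    rw [hderiv]
    exact P'pos2 r hr
  -- the three roots
  obtain ⟨R, hRmem, hR⟩ :=
    intermediate_value_Ioo hr₁pos.le hPcont.continuousOn ⟨hP0, hPr₁⟩
  obtain ⟨r₀, hr₀mem, hr₀⟩ :=
    intermediate_value_Ioo' hr₁r₂.le hPcont.continuousOn ⟨hPr₂, hPr₁⟩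
  -- a far point T₂ where P > 0
  obtain ⟨T₂, hT₂def⟩ : ∃ t : ℝ, t = r₂ + 3 / (s * Λ) + s * Q ^ 2 + 1 := ⟨_, rfl⟩
  have hsQ2 : 0 < s * Q ^ 2 := mul_pos hs0 hQ2
  have hT₂r₂ : r₂ < T₂ := by rw [hT₂def]; linarith
  have hT₂1 : 1 + s * Q ^ 2 ≤ T₂ := by rw [hT₂def]; linarith
  have hT₂pos : 0 < T₂ := by linarith
  have haT₂ : 3 ≤ s * Λ * T₂ := by
    have h' : 3 / (s * Λ) ≤ T₂ := by rw [hT₂def]; linarith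
    have := (div_le_iff₀ hsΛ).mp h'
    linarith
  have hPT₂ : 0 < P M Q Λ s T₂ := by
    simp only [P]
    exact aux_P_far s Λ M Q T₂ hs0 hM hQ2 hT₂1 haT₂
  obtain ⟨rinf, hrinfmem, hrinf⟩ :=
    intermediate_value_Ioo hT₂r₂.le hPcont.continuousOn ⟨hPr₂, hPT₂⟩
  -- assemble
  have hR0 : 0 < R := hRmem.1
  have hRr₁ : R < r₁ := hRmem.2
  have hr₁r₀ : r₁ < r₀ := hr₀mem.1
  have hr₀r₂ : r₀ < r₂ := hr₀mem.2
  have hr₂rinf : r₂ < rinf := hrinfmem.1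
  refine ⟨R, r₀, rinf, hR0, by linarith, by linarith, hR, hr₀, hrinf, ?_, ?_, ?_, ?_, ?_, ?_, ?_, ?_⟩
  · -- uniqueness
    intro r hr hPr
    rcases le_or_gt r r₁ with h | h
    · left
      exact mono1.injOn ⟨hr.le, h⟩ ⟨hR0.le, hRr₁.le⟩ (by rw [hPr, hR])
    · rcases le_or_gt r r₂ with h2 | h2
      · right; left
        exact anti.injOn ⟨h.le, h2⟩ ⟨hr₁r₀.le, hr₀r₂.le⟩ (by rw [hPr, hr₀])
      · right; right
        exact mono2.injOn (Set.mem_Ici.mpr h2.le) (Set.mem_Ici.mpr hr₂rinf.le)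
          (by rw [hPr, hrinf])
  · exact P'pos1 R hR0.le hRr₁
  · exact P'neg r₀ hr₁r₀ hr₀r₂
  · exact P'pos2 rinf hr₂rinf
  · -- negative on [0, R)
    intro r h0 hrR
    have := mono1 ⟨h0, by linarith⟩ ⟨hR0.le, hRr₁.le⟩ hrR
    rw [hR] at this
    exact this
  · -- negative on (r₀, rinf)
    intro r hr₀r hrrinf
    rcases le_or_gt r r₂ with h | h
    · have := anti ⟨hr₁r₀.le, hr₀r₂.le⟩ ⟨by linarith, h⟩ hr₀r
      rw [hr₀] at this
      exact this
    · have := mono2 (Set.mem_Ici.mpr h.le) (Set.mem_Ici.mpr hr₂rinf.le) hrrinf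
      rw [hrinf] at this
      exact this
  · -- positive on (R, r₀)
    intro r hRr hrr₀
    rcases le_or_gt r r₁ with h | h
    · have := mono1 ⟨hR0.le, hRr₁.le⟩ ⟨by linarith, h⟩ hRr
      rw [hR] at this
      exact this
    · have := anti ⟨h.le, by linarith⟩ ⟨hr₁r₀.le, hr₀r₂.le⟩ hrr₀
      rw [hr₀] at this
      exact this
  · -- positive beyond rinf
    intro r hrinfr
    have := mono2 (Set.mem_Ici.mpr hr₂rinf.le) (Set.mem_Ici.mpr (by linarith)) hrinfr
    rw [hrinf] at this
    exact this
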